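/- The generating function for the 'last descent' statistic over 321-avoiding permutations of S_n equals the generating function for 'last descent' over Dyck paths of length 2n, and also equals the generating function for 'lind - 1' over Dyck paths of length 2n: Σ_{π∈T_n} q^{ldes(π)} = Σ_{p∈P_n} q^{ldes(p)} = Σ_{p∈P_n} q^{lind(p)-1}. -/

import Mathlib

open Finset

/-- A permutation is 321-avoiding if it has no decreasing subsequence of length 3. -/
def Avoids321 {n : ℕ} (π : Equiv.Perm (Fin n)) : Prop :=
  ¬ ∃ i j k : Fin n, i < j ∧ j < k ∧ π k < π j ∧ π j < π i

instance {n : ℕ} : DecidablePred (Avoids321 (n := n)) := fun π =>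
  decidable_of_iff (¬ ∃ i j k : Fin n, i < j ∧ j < k ∧ π k < π j ∧ π j < π i) Iff.rfl

/-- The set `T_n` of 321-avoiding permutations of order `n`. -/
def Tset (n : ℕ) : Finset (Equiv.Perm (Fin n)) :=
  Finset.univ.filter (fun π => Avoids321 π)

/-- The value `π(i)` in one-based notation: positions `1,…,n`, values `1,…,n`. -/
def pval {n : ℕ} (π : Equiv.Perm (Fin n)) (i : ℕ) : ℕ :=
  if h : i - 1 < n then (π ⟨i - 1, h⟩ : ℕ) + 1 else 0

/-- The descent set `Des(π) = {1 ≤ i ≤ n-1 : π(i) > π(i+1)}` (one-based). -/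
def desSet {n : ℕ} (π : Equiv.Perm (Fin n)) : Finset ℕ :=
  (Finset.Icc 1 (n - 1)).filter (fun i => pval π (i + 1) < pval π i)

/-- The last descent of `π` (0 for the identity). -/
def ldes {n : ℕ} (π : Equiv.Perm (Fin n)) : ℕ := (desSet π).sup id

/-- `lind(π) = π⁻¹(n)`, the (one-based) position of the letter `n` in `π`. -/
def lind {n : ℕ} (π : Equiv.Perm (Fin n)) : ℕ := pval π.symm n

/-- The inversion number of `π`. -/
def invNum {n : ℕ} (π : Equiv.Perm (Fin n)) : ℕ :=
  (Finset.univ.filter (fun q : Fin n × Fin n => q.1 < q.2 ∧ π q.2 < π q.1)).card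

/-- A ±1 sequence of length `2n` (`true` = +1) is a Dyck path if it has `n` up
steps and every prefix has at least as many up steps as down steps. -/
def IsDyckPred (n : ℕ) (p : Fin (2 * n) → Bool) : Prop :=
  (Finset.univ.filter (fun i => p i = true)).card = n ∧
  ∀ k ≤ 2 * n,
    k ≤ 2 * (Finset.univ.filter (fun i : Fin (2 * n) => (i : ℕ) < k ∧ p i = true)).card

instance (n : ℕ) : DecidablePred (IsDyckPred n) := fun p => by
  unfold IsDyckPred; infer_instance

/-- The set `P_n` of Dyck paths of length `2n`. -/
def DyckPath (n : ℕ) : Type := { p : Fin (2 * n) → Bool // IsDyckPred n p }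

instance (n : ℕ) : Fintype (DyckPath n) := by unfold DyckPath; infer_instance

/-- The `i`-th step of the path, one-based; `true` = +1, `false` = -1. -/
def pstep {n : ℕ} (p : DyckPath n) (i : ℕ) : Bool :=
  if h : i - 1 < 2 * n then p.1 ⟨i - 1, h⟩ else false

/-- `Des(p) = {1 ≤ i ≤ n-1 : p_i = +1, p_{i+1} = -1}`. -/
def pathDes {n : ℕ} (p : DyckPath n) : Finset ℕ :=
  (Finset.Icc 1 (n - 1)).filter (fun i => pstep p i = true ∧ pstep p (i + 1) = false)

/-- `Des(p⁻¹) = {1 ≤ i ≤ n-1 : p_{2n-i} = +1, p_{2n-i+1} = -1}`. -/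
def pathDesInv {n : ℕ} (p : DyckPath n) : Finset ℕ :=
  (Finset.Icc 1 (n - 1)).filter
    (fun i => pstep p (2 * n - i) = true ∧ pstep p (2 * n - i + 1) = false)

/-- `ldes(p) = max{1 ≤ i ≤ n-1 : p_i = +1, p_{i+1} = -1}` (0 if none). -/
def pathLdes {n : ℕ} (p : DyckPath n) : ℕ := (pathDes p).sup id

/-- `lind(p) = max{1 ≤ i ≤ n : p_i = +1, p_{i+1} = -1}` (0 if none). -/
def pathLind {n : ℕ} (p : DyckPath n) : ℕ :=
  ((Finset.Icc 1 n).filter (fun i => pstep p i = true ∧ pstep p (i + 1) = false)).sup id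

/-- `tail(p) = 2n - max{i : p_i = +1, p_{i+1} = -1}`, the number of consecutive
down steps at the end of `p`. -/
def pathTail {n : ℕ} (p : DyckPath n) : ℕ :=
  2 * n -
    ((Finset.Icc 1 (2 * n - 1)).filter
      (fun i => pstep p i = true ∧ pstep p (i + 1) = false)).sup id

section CntMachinery

open Finset

variable {m : ℕ}

def cnt (p : Fin m → Bool) (k : ℕ) : ℕ :=
  (Finset.univ.filter (fun i : Fin m => (i : ℕ) < k ∧ p i = true)).card

lemma cnt_zero (p : Fin m → Bool) : cnt p 0 = 0 := by
  simp [cnt]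

lemma cnt_succ (p : Fin m → Bool) (k : ℕ) (hk : k < m) :
    cnt p (k + 1) = cnt p k + (if p ⟨k, hk⟩ = true then 1 else 0) := by
  classical
  unfold cnt
  have h1 : (Finset.univ.filter (fun i : Fin m => (i : ℕ) < k + 1 ∧ p i = true))
      = (Finset.univ.filter (fun i : Fin m => (i : ℕ) < k ∧ p i = true))
        ∪ (Finset.univ.filter (fun i : Fin m => i = ⟨k, hk⟩ ∧ p i = true)) := by
    rw [← Finset.filter_or]
    apply Finset.filter_congr
    intro i _
    by_cases hp : p i = true <;> simp [hp, Fin.ext_iff] <;> omega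
  rw [h1, Finset.card_union_of_disjoint]
  · congr 1
    by_cases hp : p ⟨k, hk⟩ = true
    · rw [if_pos hp]
      rw [show (Finset.univ.filter (fun i : Fin m => i = ⟨k, hk⟩ ∧ p i = true)) = {⟨k, hk⟩} from ?_]
      · exact Finset.card_singleton _
      · ext i
        simp only [Finset.mem_filter, Finset.mem_univ, true_and, Finset.mem_singleton]
        exact ⟨fun h => h.1, fun h => ⟨h, h ▸ hp⟩⟩
    · rw [if_neg hp]
      rw [Finset.card_eq_zero]
      ext i
      simp only [Finset.mem_filter, Finset.mem_univ, true_and, Finset.notMem_empty, iff_false,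
        not_and]
      rintro rfl; exact hp
  · rw [Finset.disjoint_left]
    intro i hi hi2
    simp only [Finset.mem_filter, Finset.mem_univ, true_and] at hi hi2
    rw [hi2.1] at hi
    exact absurd hi.1 (by simp)

lemma cnt_stable (p : Fin m → Bool) {k : ℕ} (h : m ≤ k) : cnt p k = cnt p m := by
  unfold cnt
  congr 1
  ext i
  simp only [Finset.mem_filter, Finset.mem_univ, true_and]
  have := i.isLt
  constructor
  · rintro ⟨_, h2⟩; exact ⟨this, h2⟩
  · rintro ⟨_, h2⟩; exact ⟨by omega, h2⟩

lemma cnt_top (p : Fin m → Bool) :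
    cnt p m = (Finset.univ.filter (fun i => p i = true)).card := by
  unfold cnt
  congr 1
  ext i
  simp only [Finset.mem_filter, Finset.mem_univ, true_and]
  exact and_iff_right i.isLt

/-- The one-sided-infinite step sequence of `p` (0-based), `false` beyond the range. -/
def stepf (p : Fin m → Bool) : ℕ → Bool := fun i => if h : i < m then p ⟨i, h⟩ else false

lemma stepf_lt (p : Fin m → Bool) {i : ℕ} (h : i < m) : stepf p i = p ⟨i, h⟩ := dif_pos h

lemma stepf_ge (p : Fin m → Bool) {i : ℕ} (h : m ≤ i) : stepf p i = false := dif_neg (by omega)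

/-- Recursive count of `true`s among `f 0, …, f (k-1)`. -/
def cntR (f : ℕ → Bool) : ℕ → ℕ
  | 0 => 0
  | k + 1 => cntR f k + (if f k then 1 else 0)

lemma cntR_eq (p : Fin m → Bool) : ∀ k, cntR (stepf p) k = cnt p k := by
  intro k
  induction k with
  | zero => rw [cnt_zero]; rfl
  | succ k ih =>
    show cntR (stepf p) k + _ = _
    by_cases h : k < m
    · rw [cnt_succ p k h, ih, stepf_lt p h]
    · rw [cnt_stable p (by omega : m ≤ k + 1), ← cnt_stable p (by omega : m ≤ k), ← ih,
        stepf_ge p (by omega)]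
      simp

lemma cntR_mono (f : ℕ → Bool) {k l : ℕ} (h : k ≤ l) : cntR f k ≤ cntR f l := by
  induction l with
  | zero =>
    have hk : k = 0 := by omega
    subst hk; exact le_refl _
  | succ l ih =>
    rcases Nat.lt_or_ge k (l + 1) with h2 | h2
    · calc cntR f k ≤ cntR f l := ih (by omega)
        _ ≤ cntR f (l + 1) := by show _ ≤ cntR f l + _; split <;> omega
    · have hk : k = l + 1 := by omega
      subst hk; exact le_refl _

lemma cntR_of_true (f : ℕ → Bool) (k : ℕ) (h : ∀ i < k, f i = true) : cntR f k = k := by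
  induction k with
  | zero => rfl
  | succ k ih =>
    show cntR f k + _ = _
    rw [ih (fun i hi => h i (by omega)), if_pos (h k (by omega))]

end CntMachinery

lemma isDyck_iff {n : ℕ} (p : Fin (2 * n) → Bool) :
    IsDyckPred n p ↔ cntR (stepf p) (2 * n) = n ∧ ∀ k ≤ 2 * n, k ≤ 2 * cntR (stepf p) k := by
  unfold IsDyckPred
  constructor
  · rintro ⟨h1, h2⟩
    refine ⟨by rw [cntR_eq, cnt_top]; exact h1, fun k hk => ?_⟩
    rw [cntR_eq]
    exact h2 k hk
  · rintro ⟨h1, h2⟩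
    refine ⟨by rw [← cnt_top, ← cntR_eq]; exact h1, fun k hk => ?_⟩
    have := h2 k hk
    rwa [cntR_eq] at this

lemma pstep_eq {n : ℕ} (p : DyckPath n) (t : ℕ) : pstep p t = stepf p.1 (t - 1) := rfl

lemma pstep_eq' {n : ℕ} (p : DyckPath n) (t : ℕ) : pstep p (t + 1) = stepf p.1 t := by
  rw [pstep_eq]
  congr 1
section PathInsDel

open Finset

/-- Insert an up-step at 0-based position `a` and a down-step right after. -/
def insP {n : ℕ} (p' : Fin (2 * n) → Bool) (a : ℕ) : Fin (2 * (n + 1)) → Bool := fun t =>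
  if (t : ℕ) < a then stepf p' (t : ℕ)
  else if (t : ℕ) = a then true
  else if (t : ℕ) = a + 1 then false
  else stepf p' ((t : ℕ) - 2)

lemma stepf_insP_lt {n : ℕ} (p' : Fin (2 * n) → Bool) {a t : ℕ} (ha : a ≤ 2 * n + 1)
    (h : t < a) : stepf (insP p' a) t = stepf p' t := by
  rw [stepf_lt (insP p' a) (show t < 2 * (n + 1) by omega)]
  show (if t < a then stepf p' t else if t = a then true
    else if t = a + 1 then false else stepf p' (t - 2)) = stepf p' t
  rw [if_pos h]

lemma stepf_insP_self {n : ℕ} (p' : Fin (2 * n) → Bool) {a : ℕ} (ha : a ≤ 2 * n + 1) :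
    stepf (insP p' a) a = true := by
  rw [stepf_lt (insP p' a) (show a < 2 * (n + 1) by omega)]
  show (if a < a then stepf p' a else if a = a then true
    else if a = a + 1 then false else stepf p' (a - 2)) = true
  rw [if_neg (by omega), if_pos rfl]

lemma stepf_insP_a1 {n : ℕ} (p' : Fin (2 * n) → Bool) {a : ℕ} (ha : a ≤ 2 * n) :
    stepf (insP p' a) (a + 1) = false := by
  rw [stepf_lt (insP p' a) (show a + 1 < 2 * (n + 1) by omega)]
  show (if a + 1 < a then stepf p' (a + 1) else if a + 1 = a then true
    else if a + 1 = a + 1 then false else stepf p' (a + 1 - 2)) = false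
  rw [if_neg (by omega), if_neg (by omega), if_pos rfl]

lemma stepf_insP_gt {n : ℕ} (p' : Fin (2 * n) → Bool) {a t : ℕ} (h : a + 2 ≤ t) :
    stepf (insP p' a) t = stepf p' (t - 2) := by
  rcases Nat.lt_or_ge t (2 * (n + 1)) with ht | ht
  · rw [stepf_lt (insP p' a) ht]
    show (if t < a then stepf p' t else if t = a then true
      else if t = a + 1 then false else stepf p' (t - 2)) = stepf p' (t - 2)
    rw [if_neg (by omega), if_neg (by omega), if_neg (by omega)]
  · rw [stepf_ge (insP p' a) (by omega), stepf_ge p' (by omega)]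

lemma cntR_insP {n : ℕ} (p' : Fin (2 * n) → Bool) {a : ℕ} (ha : a ≤ 2 * n) :
    ∀ k, cntR (stepf (insP p' a)) k =
      if k ≤ a then cntR (stepf p') k
      else if k = a + 1 then cntR (stepf p') a + 1 else cntR (stepf p') (k - 2) + 1 := by
  intro k
  induction k with
  | zero => rw [if_pos (Nat.zero_le a)]; rfl

  | succ k ih =>
    have step : cntR (stepf (insP p' a)) (k + 1)
        = cntR (stepf (insP p' a)) k + (if stepf (insP p' a) k then 1 else 0) := rfl
    have step' : ∀ j, cntR (stepf p') (j + 1)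
        = cntR (stepf p') j + (if stepf p' j then 1 else 0) := fun _ => rfl
    rcases Nat.lt_trichotomy k a with hka | hka | hka
    · rw [if_pos (by omega : k ≤ a)] at ih
      rw [step, stepf_insP_lt p' (by omega) hka, ih,
        if_pos (show k + 1 ≤ a by omega), step']
    · subst hka
      rw [if_pos (le_refl k)] at ih
      rw [step, stepf_insP_self p' (by omega), ih,
        if_neg (show ¬ (k + 1 ≤ k) by omega), if_pos rfl]
      simp
    · rcases Nat.lt_trichotomy k (a + 1) with h2 | h2 | h2
      · omega
      · subst h2
        rw [if_pos rfl] at ih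
        rw [step, stepf_insP_a1 p' ha, ih,
          if_neg (show ¬ (a + 1 + 1 ≤ a) by omega),
          if_neg (show ¬ (a + 1 + 1 = a + 1) by omega)]
        have e : a + 1 + 1 - 2 = a := by omega
        rw [e]
        simp
      · rw [if_neg (by omega), if_neg (by omega)] at ih
        rw [step, stepf_insP_gt p' (by omega), ih,
          if_neg (show ¬ (k + 1 ≤ a) by omega),
          if_neg (show ¬ (k + 1 = a + 1) by omega)]
        have e1 : k + 1 - 2 = (k - 2) + 1 := by omega
        rw [e1, step']
        ring

lemma isDyck_insP {n : ℕ} {p' : Fin (2 * n) → Bool} (hp : IsDyckPred n p') {a : ℕ} (ha : a ≤ n) :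
    IsDyckPred (n + 1) (insP p' a) := by
  rw [isDyck_iff] at hp ⊢
  obtain ⟨hc, hpre⟩ := hp
  constructor
  · rw [cntR_insP p' (by omega) (2 * (n + 1)), if_neg (by omega), if_neg (by omega)]
    have e : 2 * (n + 1) - 2 = 2 * n := by omega
    rw [e, hc]
  · intro k hk
    rw [cntR_insP p' (by omega) k]
    split
    · exact hpre k (by omega)
    · split
      · have := hpre a (by omega)
        omega
      · have := hpre (k - 2) (by omega)
        omega

/-- Delete the steps at 0-based positions `a` and `a+1`. -/
def delP {n : ℕ} (p : Fin (2 * (n + 1)) → Bool) (a : ℕ) : Fin (2 * n) → Bool := fun t =>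
  if (t : ℕ) < a then stepf p (t : ℕ) else stepf p ((t : ℕ) + 2)

lemma stepf_delP_lt {n : ℕ} (p : Fin (2 * (n + 1)) → Bool) {a t : ℕ} (h : t < a) (ht : t < 2 * n) :
    stepf (delP p a) t = stepf p t := by
  rw [stepf_lt (delP p a) ht]
  show (if t < a then stepf p t else stepf p (t + 2)) = stepf p t
  rw [if_pos h]

lemma stepf_delP_ge {n : ℕ} (p : Fin (2 * (n + 1)) → Bool) {a t : ℕ} (h : a ≤ t) :
    stepf (delP p a) t = if t < 2 * n then stepf p (t + 2) else false := by
  rcases Nat.lt_or_ge t (2 * n) with ht | ht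
  · rw [if_pos ht, stepf_lt (delP p a) ht]
    show (if t < a then stepf p t else stepf p (t + 2)) = stepf p (t + 2)
    rw [if_neg (by omega)]
  · rw [if_neg (by omega), stepf_ge (delP p a) (by omega)]

lemma cntR_delP {n : ℕ} (p : Fin (2 * (n + 1)) → Bool) {a : ℕ} (ha : a ≤ 2 * n)
    (hT : stepf p a = true) (hF : stepf p (a + 1) = false) :
    ∀ k ≤ 2 * n, (k ≤ a → cntR (stepf (delP p a)) k = cntR (stepf p) k) ∧
      (a ≤ k → cntR (stepf (delP p a)) k + 1 = cntR (stepf p) (k + 2)) := by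
  intro k
  induction k with
  | zero =>
    intro _
    refine ⟨fun _ => rfl, fun h0 => ?_⟩
    have ha0 : a = 0 := by omega
    subst ha0
    show 0 + 1 = cntR (stepf p) 1 + _
    show 0 + 1 = 0 + _ + _
    rw [hT, hF]
    simp
  | succ k ih =>
    intro hk
    have ih' := ih (by omega)
    have step : ∀ j, cntR (stepf (delP p a)) (j + 1)
        = cntR (stepf (delP p a)) j + (if stepf (delP p a) j then 1 else 0) := fun _ => rfl
    have step' : ∀ j, cntR (stepf p) (j + 1)
        = cntR (stepf p) j + (if stepf p j then 1 else 0) := fun _ => rfl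
    constructor
    · intro hk1
      rw [step, stepf_delP_lt p (by omega) (by omega), ih'.1 (by omega), step']
    · intro hk1
      rcases Nat.lt_trichotomy k a with h2 | h2 | h2
      · -- a = k + 1
        have hak : a = k + 1 := by omega
        subst hak
        rw [step, stepf_delP_lt p (by omega) (by omega), ih'.1 (by omega)]
        have e2 : k + 1 + 2 = (k + 2) + 1 := rfl
        have e3 : k + 2 = (k + 1) + 1 := rfl
        rw [e2, step', e3, step', hT, hF]
        simp only [if_true, if_false, Bool.false_eq_true]
        first
        | omega
        | rw [step' k]
        | (rw [step' k]; omega)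
      · subst h2
        rw [step, stepf_delP_ge p (le_refl k), if_pos (show k < 2 * n by omega)]
        have e : k + 1 + 2 = (k + 2) + 1 := rfl
        rw [e, step', ← ih'.2 (le_refl k)]
        ring
      · rw [step, stepf_delP_ge p (by omega), if_pos (show k < 2 * n by omega)]
        have e : k + 1 + 2 = (k + 2) + 1 := rfl
        rw [e, step', ← ih'.2 (by omega)]
        ring

lemma isDyck_delP {n : ℕ} {p : Fin (2 * (n + 1)) → Bool} (hp : IsDyckPred (n + 1) p) {a : ℕ}
    (ha : a ≤ n) (hT : stepf p a = true) (hF : stepf p (a + 1) = false) :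
    IsDyckPred n (delP p a) := by
  rw [isDyck_iff] at hp ⊢
  obtain ⟨hc, hpre⟩ := hp
  have key := cntR_delP p (by omega) hT hF
  constructor
  · have := (key (2 * n) (le_refl _)).2 (by omega)
    have e : 2 * n + 2 = 2 * (n + 1) := by omega
    rw [e, hc] at this
    omega
  · intro k hk
    rcases le_or_gt k a with h2 | h2
    · rw [(key k hk).1 h2]
      exact hpre k (by omega)
    · have h3 := (key k hk).2 (by omega)
      have h4 := hpre (k + 2) (by omega)
      omega

end PathInsDel
section PathStats

open Finset

lemma sup_id_eq_of {s : Finset ℕ} {j : ℕ} (hj : j ∈ s) (h : ∀ t ∈ s, t ≤ j) : s.sup id = j :=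
  le_antisymm (Finset.sup_le h) (Finset.le_sup (f := id) hj)

def peakSet {m : ℕ} (p : DyckPath m) (B : ℕ) : Finset ℕ :=
  (Finset.Icc 1 B).filter (fun i => pstep p i = true ∧ pstep p (i + 1) = false)

lemma mem_peakSet {m : ℕ} (p : DyckPath m) (B i : ℕ) :
    i ∈ peakSet p B ↔ (1 ≤ i ∧ i ≤ B) ∧ stepf p.1 (i - 1) = true ∧ stepf p.1 i = false := by
  unfold peakSet
  rw [Finset.mem_filter, Finset.mem_Icc, pstep_eq, pstep_eq']

lemma pathLdes_def {m : ℕ} (p : DyckPath m) : pathLdes p = (peakSet p (m - 1)).sup id := rfl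

lemma pathLind_def {m : ℕ} (p : DyckPath m) : pathLind p = (peakSet p m).sup id := rfl

lemma pathLdes_le {m : ℕ} (p : DyckPath m) {t : ℕ} (ht : t ∈ peakSet p (m - 1)) :
    t ≤ pathLdes p := Finset.le_sup (f := id) ht

/-- Existence and properties of the last peak position of a nonempty Dyck path. -/
lemma lind_facts {n : ℕ} (p : DyckPath (n + 1)) :
    (1 ≤ pathLind p ∧ pathLind p ≤ n + 1) ∧
      stepf p.1 (pathLind p - 1) = true ∧ stepf p.1 (pathLind p) = false := by
  obtain ⟨hc, hpre⟩ := (isDyck_iff p.1).1 p.2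
  -- first step is up
  have step1 : stepf p.1 0 = true := by
    by_contra h0
    have h1 : cntR (stepf p.1) 1 = 0 := by
      show 0 + _ = 0
      rw [if_neg h0]
    have := hpre 1 (by omega)
    omega
  -- first down step exists
  have hex : ∃ k, stepf p.1 (k + 1) = false := by
    refine ⟨2 * n + 1, stepf_ge p.1 (by omega)⟩
  classical
  set k0 := Nat.find hex with hk0
  have hQ : stepf p.1 (k0 + 1) = false := Nat.find_spec hex
  have hmin : ∀ i, i < k0 + 1 → stepf p.1 i = true := by
    intro i hi
    match i with
    | 0 => exact step1
    | (m + 1) =>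
      have hm := Nat.find_min hex (show m < k0 by omega)
      cases h : stepf p.1 (m + 1)
      · exact absurd h hm
      · rfl
  have hcnt : cntR (stepf p.1) (k0 + 1) = k0 + 1 := cntR_of_true _ _ hmin
  have hk0le : k0 ≤ 2 * n + 1 := Nat.find_min' hex (stepf_ge p.1 (by omega))
  have hbound : k0 + 1 ≤ n + 1 := by
    have h2 := cntR_mono (stepf p.1) (show k0 + 1 ≤ 2 * (n + 1) by omega)
    omega
  have hmem : k0 + 1 ∈ peakSet p (n + 1) := by
    rw [mem_peakSet]
    exact ⟨⟨by omega, hbound⟩, by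
      rw [show k0 + 1 - 1 = k0 by omega]; exact hmin k0 (by omega), hQ⟩
  have hne : (peakSet p (n + 1)).Nonempty := ⟨k0 + 1, hmem⟩
  obtain ⟨b, hb, hbeq⟩ := Finset.exists_mem_eq_sup _ hne id
  rw [pathLind_def]
  rw [mem_peakSet] at hb
  rw [hbeq]
  exact ⟨⟨hb.1.1, hb.1.2⟩, hb.2.1, hb.2.2⟩

def insD {n : ℕ} (p' : DyckPath n) (j : ℕ) : DyckPath (n + 1) :=
  ⟨insP p'.1 (min (j - 1) n), isDyck_insP p'.2 (min_le_right _ _)⟩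

def delD {n : ℕ} (p : DyckPath (n + 1)) : DyckPath n :=
  ⟨delP p.1 (pathLind p - 1), by
    obtain ⟨⟨h1, h2⟩, hT, hF⟩ := lind_facts p
    refine isDyck_delP p.2 (by omega) hT ?_
    rw [show pathLind p - 1 + 1 = pathLind p by omega]
    exact hF⟩

section InsDFacts

variable {n : ℕ} (p' : DyckPath n) {j : ℕ} (hj1 : pathLdes p' + 1 ≤ j) (hj2 : j ≤ n + 1)

include hj1 hj2

lemma insD_min : min (j - 1) n = j - 1 := min_eq_left (by omega)

lemma insD_sv1 {t : ℕ} (ht : t < j - 1) : stepf (insD p' j).1 t = stepf p'.1 t := by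
  show stepf (insP p'.1 (min (j - 1) n)) t = _
  rw [insD_min p' hj1 hj2]
  exact stepf_insP_lt p'.1 (by omega) ht

lemma insD_sv2 : stepf (insD p' j).1 (j - 1) = true := by
  show stepf (insP p'.1 (min (j - 1) n)) (j - 1) = _
  rw [insD_min p' hj1 hj2]
  exact stepf_insP_self p'.1 (by omega)

lemma insD_sv3 : stepf (insD p' j).1 j = false := by
  show stepf (insP p'.1 (min (j - 1) n)) j = _
  rw [insD_min p' hj1 hj2, show j = (j - 1) + 1 by omega]
  exact stepf_insP_a1 p'.1 (by omega)

lemma insD_sv4 {t : ℕ} (ht : j + 1 ≤ t) : stepf (insD p' j).1 t = stepf p'.1 (t - 2) := by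
  show stepf (insP p'.1 (min (j - 1) n)) t = _
  rw [insD_min p' hj1 hj2]
  exact stepf_insP_gt p'.1 (by omega)

/-- No peak of `insD p' j` lies strictly beyond `j` (within one-based positions `≤ n+1`). -/
lemma insD_nopeak {t : ℕ} (ht1 : t ≤ n + 1) (hT : stepf (insD p' j).1 (t - 1) = true)
    (hF : stepf (insD p' j).1 t = false) (h1t : 1 ≤ t) : t ≤ j := by
  by_contra hc
  push_neg at hc
  rcases Nat.lt_or_ge t (j + 2) with h2 | h2
  · -- t = j + 1
    have e : t - 1 = j := by omega
    rw [e, insD_sv3 p' hj1 hj2] at hT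
    exact absurd hT (by simp)
  · -- t ≥ j + 2
    rw [insD_sv4 p' hj1 hj2 (by omega)] at hF
    have e : t - 1 = (t - 2) + 1 := by omega
    rw [e, insD_sv4 p' hj1 hj2 (by omega)] at hT
    have e2 : t - 2 + 1 - 2 = (t - 2) - 1 := by omega
    rw [e2] at hT
    have hmem : t - 2 ∈ peakSet p' (n - 1) := by
      rw [mem_peakSet]
      exact ⟨⟨by omega, by omega⟩, hT, hF⟩
    have := pathLdes_le p' hmem
    omega

lemma pathLind_insD : pathLind (insD p' j) = j := by
  rw [pathLind_def]
  apply sup_id_eq_of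
  · rw [mem_peakSet]
    exact ⟨⟨by omega, hj2⟩, insD_sv2 p' hj1 hj2, insD_sv3 p' hj1 hj2⟩
  · intro t ht
    rw [mem_peakSet] at ht
    exact insD_nopeak p' hj1 hj2 ht.1.2 ht.2.1 ht.2.2 ht.1.1

lemma pathLdes_insD :
    pathLdes (insD p' j) = if j = n + 1 then pathLdes p' else j := by
  split
  · next hj =>
    subst hj
    rw [pathLdes_def, pathLdes_def]
    congr 1
    ext t
    rw [mem_peakSet, mem_peakSet]
    have e : n + 1 - 1 = n := by omega
    rw [e]
    constructor
    · rintro ⟨⟨h1, h2⟩, hT, hF⟩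
      rcases Nat.lt_or_ge t n with h3 | h3
      · rw [insD_sv1 p' hj1 hj2 (show t - 1 < n + 1 - 1 by omega)] at hT
        rw [insD_sv1 p' hj1 hj2 (show t < n + 1 - 1 by omega)] at hF
        exact ⟨⟨h1, by omega⟩, hT, hF⟩
      · -- t = n; but then stepf at t is true, contradiction
        have hv := insD_sv2 p' hj1 hj2
        rw [show n + 1 - 1 = t by omega] at hv
        rw [hv] at hF
        exact absurd hF (by simp)
    · rintro ⟨⟨h1, h2⟩, hT, hF⟩
      refine ⟨⟨h1, by omega⟩, ?_, ?_⟩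
      · rw [insD_sv1 p' hj1 hj2 (show t - 1 < n + 1 - 1 by omega)]
        exact hT
      · rw [insD_sv1 p' hj1 hj2 (show t < n + 1 - 1 by omega)]
        exact hF
  · next hj =>
    rw [pathLdes_def]
    apply sup_id_eq_of
    · rw [mem_peakSet]
      have e : n + 1 - 1 = n := by omega
      rw [e]
      exact ⟨⟨by omega, by omega⟩, insD_sv2 p' hj1 hj2, insD_sv3 p' hj1 hj2⟩
    · intro t ht
      rw [mem_peakSet] at ht
      obtain ⟨⟨h1, h2⟩, hpT, hpF⟩ := ht
      exact insD_nopeak p' hj1 hj2 (by omega) hpT hpF h1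

lemma delD_insD : delD (insD p' j) = p' := by
  apply Subtype.ext
  show delP (insD p' j).1 (pathLind (insD p' j) - 1) = p'.1
  rw [pathLind_insD p' hj1 hj2]
  funext t
  have htl := t.isLt
  show (if (t : ℕ) < j - 1 then stepf (insD p' j).1 (t : ℕ)
    else stepf (insD p' j).1 ((t : ℕ) + 2)) = p'.1 t
  rcases Nat.lt_or_ge (t : ℕ) (j - 1) with h | h
  · rw [if_pos h, insD_sv1 p' hj1 hj2 h, stepf_lt p'.1 htl]
  · rw [if_neg (by omega), insD_sv4 p' hj1 hj2 (by omega),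
      show (t : ℕ) + 2 - 2 = (t : ℕ) by omega, stepf_lt p'.1 htl]

end InsDFacts

lemma insD_delD {n : ℕ} (p : DyckPath (n + 1)) :
    pathLdes (delD p) + 1 ≤ pathLind p ∧ pathLind p ≤ n + 1 ∧
      insD (delD p) (pathLind p) = p := by
  obtain ⟨⟨hL1, hL2⟩, hT, hF⟩ := lind_facts p
  set L := pathLind p with hLdef
  have hbound : ∀ t ∈ peakSet p (n + 1), t ≤ L := fun t ht => Finset.le_sup (f := id) ht
  -- steps of delD p
  have dv1 : ∀ t < L - 1, t < 2 * n → stepf (delD p).1 t = stepf p.1 t := by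
    intro t ht h2
    exact stepf_delP_lt p.1 ht h2
  have dv2 : ∀ t, L - 1 ≤ t → stepf (delD p).1 t
      = if t < 2 * n then stepf p.1 (t + 2) else false := by
    intro t ht
    exact stepf_delP_ge p.1 ht
  have key : pathLdes (delD p) + 1 ≤ L := by
    rw [pathLdes_def]
    have : ∀ t ∈ peakSet (delD p) (n - 1), t ≤ L - 1 := by
      intro t ht
      rw [mem_peakSet] at ht
      obtain ⟨⟨h1, h2⟩, hpT, hpF⟩ := ht
      by_contra hc
      push_neg at hc
      rw [dv2 (t - 1) (by omega), if_pos (by omega),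
        show t - 1 + 2 = t + 1 by omega] at hpT
      rw [dv2 t (by omega), if_pos (by omega)] at hpF
      have hmem : t + 2 ∈ peakSet p (n + 1) := by
        rw [mem_peakSet]
        exact ⟨⟨by omega, by omega⟩, by rw [show t + 2 - 1 = t + 1 by omega]; exact hpT, hpF⟩
      have := hbound _ hmem
      omega
    have h9 : (peakSet (delD p) (n - 1)).sup id ≤ L - 1 := Finset.sup_le this
    omega
  refine ⟨key, hL2, ?_⟩
  apply Subtype.ext
  show insP (delD p).1 (min (L - 1) n) = p.1
  rw [min_eq_left (by omega)]
  funext s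
  have hsl := s.isLt
  show (if (s : ℕ) < L - 1 then stepf (delD p).1 (s : ℕ)
    else if (s : ℕ) = L - 1 then true
    else if (s : ℕ) = L - 1 + 1 then false
    else stepf (delD p).1 ((s : ℕ) - 2)) = p.1 s
  rcases Nat.lt_trichotomy (s : ℕ) (L - 1) with h | h | h
  · rw [if_pos h, dv1 _ h (by omega), stepf_lt p.1 hsl]
  · rw [if_neg (by omega), if_pos h, ← stepf_lt p.1 hsl, h, hT]
  · rw [if_neg (by omega), if_neg (by omega)]
    rcases Nat.lt_or_ge (s : ℕ) (L + 1) with h2 | h2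
    · rw [if_pos (by omega), ← stepf_lt p.1 hsl, show (s : ℕ) = L by omega, hF]
    · rw [if_neg (by omega), dv2 _ (by omega), if_pos (by omega),
        show (s : ℕ) - 2 + 2 = (s : ℕ) by omega, stepf_lt p.1 hsl]

end PathStats
section PathSumStep

open Finset

lemma path_sum_step {n : ℕ} (g : DyckPath (n + 1) → ℤ) (G : ℕ → ℕ → ℤ)
    (hg : ∀ (p' : DyckPath n) (j : ℕ), pathLdes p' + 1 ≤ j → j ≤ n + 1 →
      g (insD p' j) = G (pathLdes p') j) :
    ∑ p : DyckPath (n + 1), g p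
      = ∑ p' : DyckPath n, ∑ j ∈ Finset.Icc (pathLdes p' + 1) (n + 1), G (pathLdes p') j := by
  rw [Finset.sum_sigma']
  symm
  apply Finset.sum_nbij' (i := fun x : Σ _ : DyckPath n, ℕ => insD x.1 x.2)
    (j := fun p => ⟨delD p, pathLind p⟩)
  · intro a _
    exact Finset.mem_univ _
  · intro p _
    rw [Finset.mem_sigma]
    refine ⟨Finset.mem_univ _, ?_⟩
    rw [Finset.mem_Icc]
    obtain ⟨h1, h2, _⟩ := insD_delD p
    exact ⟨h1, h2⟩
  · rintro ⟨p', j⟩ hmem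
    rw [Finset.mem_sigma, Finset.mem_Icc] at hmem
    obtain ⟨-, hj1, hj2⟩ := hmem
    show (⟨delD (insD p' j), pathLind (insD p' j)⟩ : Σ _ : DyckPath n, ℕ) = ⟨p', j⟩
    rw [delD_insD p' hj1 hj2, pathLind_insD p' hj1 hj2]
  · intro p _
    exact (insD_delD p).2.2
  · rintro ⟨p', j⟩ hmem
    rw [Finset.mem_sigma, Finset.mem_Icc] at hmem
    obtain ⟨-, hj1, hj2⟩ := hmem
    exact (hg p' j hj1 hj2).symm

end PathSumStep
section PermInsDel

open Finset Equiv

def insPerm {n : ℕ} (π' : Equiv.Perm (Fin n)) (a : Fin (n + 1)) : Equiv.Perm (Fin (n + 1)) :=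
  ((finSuccEquiv' a).trans (Equiv.optionCongr π')).trans (finSuccEquiv' (Fin.last n)).symm

lemma insPerm_self {n : ℕ} (π' : Equiv.Perm (Fin n)) (a : Fin (n + 1)) :
    insPerm π' a a = Fin.last n := by
  unfold insPerm
  rw [Equiv.trans_apply, Equiv.trans_apply, finSuccEquiv'_at]
  show (finSuccEquiv' (Fin.last n)).symm (Option.map π' none) = _
  rw [Option.map_none, finSuccEquiv'_symm_none]

lemma insPerm_succAbove {n : ℕ} (π' : Equiv.Perm (Fin n)) (a : Fin (n + 1)) (k : Fin n) :
    insPerm π' a (a.succAbove k) = (π' k).castSucc := by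
  unfold insPerm
  rw [Equiv.trans_apply, Equiv.trans_apply, finSuccEquiv'_succAbove]
  show (finSuccEquiv' (Fin.last n)).symm (Option.map π' (some k)) = _
  rw [Option.map_some, finSuccEquiv'_symm_some, Fin.succAbove_last]

lemma insPerm_val_lt {n : ℕ} (π' : Equiv.Perm (Fin n)) (a : Fin (n + 1)) {t : ℕ}
    (h : t < (a : ℕ)) (htn : t < n) :
    insPerm π' a ⟨t, by omega⟩ = (π' ⟨t, htn⟩).castSucc := by
  have h1 : Fin.castSucc ⟨t, htn⟩ < a := by
    rw [Fin.lt_def]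
    simpa using h
  have h2 : a.succAbove ⟨t, htn⟩ = ⟨t, by omega⟩ := by
    rw [Fin.succAbove_of_castSucc_lt _ _ h1]
    apply Fin.ext
    simp
  rw [← h2, insPerm_succAbove]

lemma insPerm_val_gt {n : ℕ} (π' : Equiv.Perm (Fin n)) (a : Fin (n + 1)) {t : ℕ}
    (h : (a : ℕ) < t) (htn : t ≤ n) :
    insPerm π' a ⟨t, by omega⟩ = (π' ⟨t - 1, by omega⟩).castSucc := by
  have h1 : a ≤ Fin.castSucc ⟨t - 1, by omega⟩ := by
    rw [Fin.le_def]
    simp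
    omega
  have h2 : a.succAbove ⟨t - 1, by omega⟩ = ⟨t, by omega⟩ := by
    rw [Fin.succAbove_of_le_castSucc _ _ h1]
    apply Fin.ext
    simp
    omega
  rw [← h2, insPerm_succAbove]

lemma pval_le {n : ℕ} (π : Equiv.Perm (Fin n)) (t : ℕ) : pval π t ≤ n := by
  unfold pval
  split
  · next h => have := (π ⟨t - 1, h⟩).isLt; omega
  · omega

lemma pval_pos {n : ℕ} (π : Equiv.Perm (Fin n)) {t : ℕ} (h : t - 1 < n) : 1 ≤ pval π t := by
  unfold pval
  rw [dif_pos h]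
  omega

lemma pval_insPerm_low {n : ℕ} (π' : Equiv.Perm (Fin n)) (a : Fin (n + 1)) {t : ℕ}
    (h1 : 1 ≤ t) (h2 : t ≤ (a : ℕ)) : pval (insPerm π' a) t = pval π' t := by
  have ha := a.isLt
  unfold pval
  rw [dif_pos (show t - 1 < n + 1 by omega), dif_pos (show t - 1 < n by omega),
    insPerm_val_lt π' a (show t - 1 < (a : ℕ) by omega) (show t - 1 < n by omega)]
  simp

lemma pval_insPerm_self {n : ℕ} (π' : Equiv.Perm (Fin n)) (a : Fin (n + 1)) :
    pval (insPerm π' a) ((a : ℕ) + 1) = n + 1 := by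
  have ha := a.isLt
  unfold pval
  rw [dif_pos (show (a : ℕ) + 1 - 1 < n + 1 by omega)]
  have e : (⟨(a : ℕ) + 1 - 1, by omega⟩ : Fin (n + 1)) = a := by
    apply Fin.ext
    simp
  rw [e, insPerm_self]
  simp

lemma pval_insPerm_high {n : ℕ} (π' : Equiv.Perm (Fin n)) (a : Fin (n + 1)) {t : ℕ}
    (h1 : (a : ℕ) + 2 ≤ t) (h2 : t ≤ n + 1) : pval (insPerm π' a) t = pval π' (t - 1) := by
  unfold pval
  rw [dif_pos (show t - 1 < n + 1 by omega), dif_pos (show t - 1 - 1 < n by omega),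
    insPerm_val_gt π' a (show (a : ℕ) < t - 1 by omega) (show t - 1 ≤ n by omega)]
  simp

def delPerm {n : ℕ} (π : Equiv.Perm (Fin (n + 1))) : Equiv.Perm (Fin n) :=
  Equiv.removeNone
    (((finSuccEquiv' (π.symm (Fin.last n))).symm.trans π).trans (finSuccEquiv' (Fin.last n)))

lemma delPerm_spec {n : ℕ} (π : Equiv.Perm (Fin (n + 1))) (x : Fin n) :
    Fin.castSucc (delPerm π x) = π ((π.symm (Fin.last n)).succAbove x) := by
  set a := π.symm (Fin.last n) with hadef
  set e := (((finSuccEquiv' a).symm.trans π).trans (finSuccEquiv' (Fin.last n))) with hedef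
  have hne : π (a.succAbove x) ≠ Fin.last n := by
    intro hcon
    have : a.succAbove x = a := by
      apply π.injective
      rw [hcon, hadef, Equiv.apply_symm_apply]
    exact Fin.succAbove_ne a x this
  obtain ⟨m, hm⟩ := Fin.exists_castSucc_eq.2 hne
  have he : e (some x) = some m := by
    rw [hedef]
    rw [Equiv.trans_apply, Equiv.trans_apply, finSuccEquiv'_symm_some, ← hm,
      finSuccEquiv'_below (Fin.castSucc_lt_last m)]
  have h2 : some (delPerm π x) = e (some x) := by
    apply Equiv.removeNone_some
    exact ⟨m, he⟩
  rw [he] at h2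
  have h3 : delPerm π x = m := Option.some_injective _ h2.symm ▸ rfl
  rw [show delPerm π x = m from by injection h2, hm]

lemma insPerm_symm_last {n : ℕ} (π' : Equiv.Perm (Fin n)) (a : Fin (n + 1)) :
    (insPerm π' a).symm (Fin.last n) = a := by
  rw [Equiv.symm_apply_eq, insPerm_self]

lemma delPerm_insPerm {n : ℕ} (π' : Equiv.Perm (Fin n)) (a : Fin (n + 1)) :
    delPerm (insPerm π' a) = π' := by
  apply Equiv.ext
  intro x
  have h1 := delPerm_spec (insPerm π' a) x
  rw [insPerm_symm_last, insPerm_succAbove] at h1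
  exact Fin.castSucc_injective n h1

lemma insPerm_delPerm {n : ℕ} (π : Equiv.Perm (Fin (n + 1))) :
    insPerm (delPerm π) (π.symm (Fin.last n)) = π := by
  apply Equiv.ext
  intro i
  by_cases hi : i = π.symm (Fin.last n)
  · rw [hi, insPerm_self, Equiv.apply_symm_apply]
  · obtain ⟨x, hx⟩ := Fin.exists_succAbove_eq hi
    rw [← hx, insPerm_succAbove, delPerm_spec]

end PermInsDel
section PermStats

open Finset Equiv

lemma mem_desSet {m : ℕ} (π : Equiv.Perm (Fin m)) (t : ℕ) :
    t ∈ desSet π ↔ (1 ≤ t ∧ t ≤ m - 1) ∧ pval π (t + 1) < pval π t := by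
  unfold desSet
  rw [Finset.mem_filter, Finset.mem_Icc]

lemma ldes_def {m : ℕ} (π : Equiv.Perm (Fin m)) : ldes π = (desSet π).sup id := rfl

lemma ldes_ge {m : ℕ} (π : Equiv.Perm (Fin m)) {t : ℕ} (ht : t ∈ desSet π) : t ≤ ldes π :=
  Finset.le_sup (f := id) ht

lemma ldes_le_of {m : ℕ} (π : Equiv.Perm (Fin m)) {b : ℕ} (h : ∀ t ∈ desSet π, t ≤ b) :
    ldes π ≤ b := Finset.sup_le h

lemma ldes_le {m : ℕ} (π : Equiv.Perm (Fin m)) : ldes π ≤ m - 1 :=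
  ldes_le_of π (fun t ht => ((mem_desSet π t).1 ht).1.2)

/-- If all descents of `π'` are at positions `≤ a0`, then `π'` is strictly increasing on
0-based positions `≥ a0`. -/
lemma perm_mono {n : ℕ} (π' : Equiv.Perm (Fin n)) {a0 : ℕ} (hld : ldes π' ≤ a0) :
    ∀ x y : Fin n, a0 ≤ (x : ℕ) → x < y → π' x < π' y := by
  have adj : ∀ x : Fin n, a0 ≤ (x : ℕ) → ∀ h1 : (x : ℕ) + 1 < n,
      π' x < π' ⟨(x : ℕ) + 1, h1⟩ := by
    intro x hax h1
    by_contra hcon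
    push_neg at hcon
    have hne : π' ⟨(x : ℕ) + 1, h1⟩ ≠ π' x := by
      intro hc
      have := π'.injective hc
      rw [Fin.ext_iff] at this
      simp at this
    have hlt : π' ⟨(x : ℕ) + 1, h1⟩ < π' x := lt_of_le_of_ne hcon hne
    have hmem : (x : ℕ) + 1 ∈ desSet π' := by
      rw [mem_desSet]
      refine ⟨⟨by omega, by omega⟩, ?_⟩
      unfold pval
      rw [dif_pos (show (x : ℕ) + 1 + 1 - 1 < n by omega),
        dif_pos (show (x : ℕ) + 1 - 1 < n by omega)]
      have e1 : (⟨(x : ℕ) + 1 + 1 - 1, by omega⟩ : Fin n) = ⟨(x : ℕ) + 1, h1⟩ := by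
        apply Fin.ext; simp
      have e2 : (⟨(x : ℕ) + 1 - 1, by omega⟩ : Fin n) = x := by
        apply Fin.ext; simp
      rw [e1, e2]
      have := Fin.lt_def.1 hlt
      omega
    have := ldes_ge π' hmem
    omega
  intro x y hax hxy
  obtain ⟨k, hk⟩ : ∃ k, (y : ℕ) = (x : ℕ) + k + 1 :=
    ⟨(y : ℕ) - (x : ℕ) - 1, by have := Fin.lt_def.1 hxy; omega⟩
  induction k generalizing y with
  | zero =>
    have hy : y = ⟨(x : ℕ) + 1, by have := y.isLt; omega⟩ := by
      apply Fin.ext; simp; omega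
    rw [hy]
    exact adj x hax _
  | succ k ih =>
    have hzlt : (x : ℕ) + k + 1 < n := by have := y.isLt; omega
    set z : Fin n := ⟨(x : ℕ) + k + 1, hzlt⟩ with hzdef
    have h1 : π' x < π' z := ih z (by rw [Fin.lt_def]; simp [hzdef]) (by simp [hzdef])
    have h2 : π' z < π' y := by
      have hy : y = ⟨(z : ℕ) + 1, by have := y.isLt; simp [hzdef]; omega⟩ := by
        apply Fin.ext; simp [hzdef]; omega
      rw [hy]
      exact adj z (by simp [hzdef]; omega) _
    exact lt_trans h1 h2

lemma avoids_insPerm {n : ℕ} (π' : Equiv.Perm (Fin n)) (a : Fin (n + 1)) :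
    Avoids321 (insPerm π' a) ↔ (Avoids321 π' ∧ ldes π' ≤ (a : ℕ)) := by
  constructor
  · intro hA
    constructor
    · -- lift patterns
      rintro ⟨i, j, k, hij, hjk, h1, h2⟩
      refine hA ⟨a.succAbove i, a.succAbove j, a.succAbove k,
        Fin.strictMono_succAbove a hij, Fin.strictMono_succAbove a hjk, ?_, ?_⟩
      · rw [insPerm_succAbove, insPerm_succAbove]
        exact Fin.castSucc_lt_castSucc_iff.2 h1
      · rw [insPerm_succAbove, insPerm_succAbove]
        exact Fin.castSucc_lt_castSucc_iff.2 h2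
    · apply ldes_le_of
      intro t ht
      by_contra hc
      push_neg at hc
      rw [mem_desSet] at ht
      obtain ⟨⟨h1, h2⟩, h3⟩ := ht
      have hxlt : t - 1 < n := by omega
      have hylt : t < n := by omega
      set x : Fin n := ⟨t - 1, hxlt⟩ with hxdef
      set y : Fin n := ⟨t, hylt⟩ with hydef
      have hval : π' y < π' x := by
        unfold pval at h3
        rw [dif_pos (show t + 1 - 1 < n by omega), dif_pos (show t - 1 < n by omega)] at h3
        have e1 : (⟨t + 1 - 1, by omega⟩ : Fin n) = y := by apply Fin.ext; simp [hydef]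
        rw [e1] at h3
        rw [Fin.lt_def]
        have : ((π' ⟨t - 1, by omega⟩ : Fin n) : ℕ) = ((π' x : Fin n) : ℕ) := rfl
        omega
      have hsx : a.succAbove x = ⟨t, by omega⟩ := by
        rw [Fin.succAbove_of_le_castSucc _ _ (by rw [Fin.le_def]; simp [hxdef]; omega)]
        apply Fin.ext; simp [hxdef]; omega
      have hsy : a.succAbove y = ⟨t + 1, by omega⟩ := by
        rw [Fin.succAbove_of_le_castSucc _ _ (by rw [Fin.le_def]; simp [hydef]; omega)]
        apply Fin.ext; simp [hydef]
      refine hA ⟨a, a.succAbove x, a.succAbove y, ?_, ?_, ?_, ?_⟩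
      · rw [hsx, Fin.lt_def]; simp; omega
      · exact Fin.strictMono_succAbove a (by rw [Fin.lt_def]; simp [hxdef, hydef]; omega)
      · rw [insPerm_succAbove, insPerm_succAbove]
        exact Fin.castSucc_lt_castSucc_iff.2 hval
      · rw [insPerm_succAbove, insPerm_self]
        exact Fin.castSucc_lt_last _
  · rintro ⟨hA', hld⟩ ⟨i, j, k, hij, hjk, h1, h2⟩
    by_cases hja : j = a
    · rw [hja, insPerm_self] at h2
      exact absurd h2 (not_lt.mpr (Fin.le_last _))
    by_cases hka : k = a
    · rw [hka, insPerm_self] at h1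
      exact absurd h1 (not_lt.mpr (Fin.le_last _))
    obtain ⟨j', hj'⟩ := Fin.exists_succAbove_eq hja
    obtain ⟨k', hk'⟩ := Fin.exists_succAbove_eq hka
    have hjk' : j' < k' := by
      rw [← (Fin.strictMono_succAbove a).lt_iff_lt, hj', hk']
      exact hjk
    have hv1 : π' k' < π' j' := by
      rw [← hj', ← hk', insPerm_succAbove, insPerm_succAbove] at h1
      exact Fin.castSucc_lt_castSucc_iff.1 h1
    by_cases hia : i = a
    · -- π i = last, and j', k' are ≥ a, giving an inversion after a
      have haj : (a : ℕ) ≤ (j' : ℕ) := by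
        have : a < a.succAbove j' := by rw [hj']; rw [← hia]; exact hij
        rw [Fin.lt_succAbove_iff_le_castSucc] at this
        rw [Fin.le_def] at this
        simpa using this
      exact absurd (perm_mono π' hld j' k' haj hjk') (not_lt.mpr (le_of_lt hv1))
    · obtain ⟨i', hi'⟩ := Fin.exists_succAbove_eq hia
      have hij' : i' < j' := by
        rw [← (Fin.strictMono_succAbove a).lt_iff_lt, hi', hj']
        exact hij
      have hv2 : π' j' < π' i' := by
        rw [← hi', ← hj', insPerm_succAbove, insPerm_succAbove] at h2
        exact Fin.castSucc_lt_castSucc_iff.1 h2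
      exact hA' ⟨i', j', k', hij', hjk', hv1, hv2⟩

lemma ldes_insPerm {n : ℕ} (π' : Equiv.Perm (Fin n)) (a : Fin (n + 1))
    (hld : ldes π' ≤ (a : ℕ)) :
    ldes (insPerm π' a) = if (a : ℕ) = n then ldes π' else (a : ℕ) + 1 := by
  have ha := a.isLt
  split
  · next han =>
    rw [ldes_def, ldes_def]
    congr 1
    ext t
    rw [mem_desSet, mem_desSet]
    constructor
    · rintro ⟨⟨h1, h2⟩, h3⟩
      have h2' : t ≤ n := by omega
      rcases Nat.lt_or_ge t n with h4 | h4
      · rw [pval_insPerm_low π' a h1 (by omega), pval_insPerm_low π' a (by omega) (by omega)] at h3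
        exact ⟨⟨h1, by omega⟩, h3⟩
      · -- t = n
        have htn : t = n := by omega
        have hv1 : pval (insPerm π' a) (t + 1) = n + 1 := by
          rw [show t + 1 = (a : ℕ) + 1 by omega]
          exact pval_insPerm_self π' a
        have hv2 : pval (insPerm π' a) t = pval π' t :=
          pval_insPerm_low π' a h1 (by omega)
        have := pval_le π' t
        omega
    · rintro ⟨⟨h1, h2⟩, h3⟩
      refine ⟨⟨h1, by omega⟩, ?_⟩
      rw [pval_insPerm_low π' a h1 (by omega), pval_insPerm_low π' a (by omega) (by omega)]
      exact h3
  · next han =>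
    apply sup_id_eq_of
    · rw [mem_desSet]
      refine ⟨⟨by omega, by omega⟩, ?_⟩
      rw [pval_insPerm_self π' a, pval_insPerm_high π' a (by omega) (by omega)]
      have := pval_le π' ((a : ℕ) + 1 + 1 - 1)
      omega
    · intro t ht
      rw [mem_desSet] at ht
      obtain ⟨⟨h1, h2⟩, h3⟩ := ht
      by_contra hc
      push_neg at hc
      rw [pval_insPerm_high π' a (by omega) (by omega),
        pval_insPerm_high π' a (by omega) (by omega)] at h3
      have hmem : t - 1 ∈ desSet π' := by
        rw [mem_desSet]
        refine ⟨⟨by omega, by omega⟩, ?_⟩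
        rw [show t - 1 + 1 = t + 1 - 1 by omega]
        exact h3
      have := ldes_ge π' hmem
      omega

end PermStats
section PermSumStep

open Finset Equiv

def insT {n : ℕ} (π' : Equiv.Perm (Fin n)) (j : ℕ) : Equiv.Perm (Fin (n + 1)) :=
  insPerm π' ⟨min (j - 1) n, by omega⟩

lemma mem_Tset {m : ℕ} (π : Equiv.Perm (Fin m)) : π ∈ Tset m ↔ Avoids321 π := by
  unfold Tset
  rw [Finset.mem_filter]
  exact ⟨fun h => h.2, fun h => ⟨Finset.mem_univ _, h⟩⟩

lemma perm_sum_step (n : ℕ) (f : ℕ → ℤ) :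
    ∑ π ∈ Tset (n + 1), f (ldes π)
      = ∑ π' ∈ Tset n, ∑ j ∈ Finset.Icc (ldes π' + 1) (n + 1),
          f (if j = n + 1 then ldes π' else j) := by
  rw [Finset.sum_sigma']
  symm
  apply Finset.sum_nbij' (i := fun x : Σ _ : Equiv.Perm (Fin n), ℕ => insT x.1 x.2)
    (j := fun π => ⟨delPerm π, ((π.symm (Fin.last n) : Fin (n + 1)) : ℕ) + 1⟩)
  · rintro ⟨π', j⟩ hmem
    rw [Finset.mem_sigma, Finset.mem_Icc] at hmem
    dsimp only at hmem
    obtain ⟨hT, hj1, hj2⟩ := hmem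
    rw [mem_Tset] at hT ⊢
    rw [show insT π' j = insPerm π' ⟨min (j - 1) n, by omega⟩ from rfl, avoids_insPerm]
    refine ⟨hT, ?_⟩
    show ldes π' ≤ min (j - 1) n
    have := ldes_le π'
    omega
  · intro π hT
    rw [mem_Tset] at hT
    rw [Finset.mem_sigma, Finset.mem_Icc]
    dsimp only
    have hA : Avoids321 (insPerm (delPerm π) (π.symm (Fin.last n))) := by
      rw [insPerm_delPerm]; exact hT
    rw [avoids_insPerm] at hA
    obtain ⟨hA1, hA2⟩ := hA
    refine ⟨(mem_Tset _).2 hA1, by omega, ?_⟩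
    have := (π.symm (Fin.last n)).isLt
    omega
  · rintro ⟨π', j⟩ hmem
    rw [Finset.mem_sigma, Finset.mem_Icc] at hmem
    dsimp only at hmem
    obtain ⟨hT, hj1, hj2⟩ := hmem
    have h1 : delPerm (insT π' j) = π' := delPerm_insPerm _ _
    have h2 : (((insT π' j).symm (Fin.last n) : Fin (n + 1)) : ℕ) + 1 = j := by
      show (((insPerm π' ⟨min (j - 1) n, by omega⟩).symm (Fin.last n) : Fin (n + 1)) : ℕ) + 1 = j
      rw [insPerm_symm_last]
      show min (j - 1) n + 1 = j
      omega
    show (⟨delPerm (insT π' j), (((insT π' j).symm (Fin.last n) : Fin (n + 1)) : ℕ) + 1⟩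
        : Σ _ : Equiv.Perm (Fin n), ℕ) = ⟨π', j⟩
    rw [h1, h2]
  · intro π hT
    show insT (delPerm π) (((π.symm (Fin.last n) : Fin (n + 1)) : ℕ) + 1) = π
    have he : (⟨min (((π.symm (Fin.last n) : Fin (n + 1)) : ℕ) + 1 - 1) n, by omega⟩
        : Fin (n + 1)) = π.symm (Fin.last n) := by
      apply Fin.ext
      show min (((π.symm (Fin.last n) : Fin (n + 1)) : ℕ) + 1 - 1) n
        = ((π.symm (Fin.last n) : Fin (n + 1)) : ℕ)
      have := (π.symm (Fin.last n)).isLt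
      omega
    show insPerm (delPerm π) _ = π
    rw [he, insPerm_delPerm]
  · rintro ⟨π', j⟩ hmem
    rw [Finset.mem_sigma, Finset.mem_Icc] at hmem
    dsimp only at hmem
    obtain ⟨hT, hj1, hj2⟩ := hmem
    have hld : ldes π' ≤ ((⟨min (j - 1) n, by omega⟩ : Fin (n + 1)) : ℕ) := by
      show ldes π' ≤ min (j - 1) n
      have := ldes_le π'
      omega
    have := ldes_insPerm π' ⟨min (j - 1) n, by omega⟩ hld
    show f (if j = n + 1 then ldes π' else j) = f (ldes (insT π' j))
    rw [show insT π' j = insPerm π' ⟨min (j - 1) n, by omega⟩ from rfl, this]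
    have hmv : ((⟨min (j - 1) n, by omega⟩ : Fin (n + 1)) : ℕ) = j - 1 := by
      show min (j - 1) n = j - 1
      omega
    rw [hmv]
    by_cases hj : j = n + 1
    · rw [if_pos hj, if_pos (by omega)]
    · rw [if_neg hj, if_neg (by omega), show j - 1 + 1 = j by omega]

end PermSumStep
section MainAssembly

open Finset

lemma inner_sum_eq (n : ℕ) (f : ℕ → ℤ) {s : ℕ} (hs : s ≤ n) :
    (∑ j ∈ Finset.Icc (s + 1) (n + 1), f (if j = n + 1 then s else j))
      = f s + ∑ j ∈ Finset.Icc (s + 1) n, f j := by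
  have hsplit : Finset.Icc (s + 1) (n + 1) = insert (n + 1) (Finset.Icc (s + 1) n) := by
    ext x
    simp only [Finset.mem_Icc, Finset.mem_insert]
    omega
  rw [hsplit, Finset.sum_insert (by rw [Finset.mem_Icc]; omega), if_pos rfl]
  congr 1
  apply Finset.sum_congr rfl
  intro j hj
  rw [Finset.mem_Icc] at hj
  rw [if_neg (by omega)]

lemma inner_sum_eq' (n : ℕ) (f : ℕ → ℤ) {s : ℕ} (hs : s ≤ n) :
    (∑ j ∈ Finset.Icc (s + 1) (n + 1), f (j - 1))
      = f s + ∑ j ∈ Finset.Icc (s + 1) n, f j := by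
  have h1 : (∑ j ∈ Finset.Icc (s + 1) (n + 1), f (j - 1)) = ∑ k ∈ Finset.Icc s n, f k := by
    apply Finset.sum_nbij' (i := fun j => j - 1) (j := fun k => k + 1)
    · intro j hj
      rw [Finset.mem_Icc] at hj ⊢
      omega
    · intro k hk
      rw [Finset.mem_Icc] at hk ⊢
      omega
    · intro j hj
      rw [Finset.mem_Icc] at hj
      omega
    · intro k _
      omega
    · intro j _
      rfl
  rw [h1]
  have hsplit : Finset.Icc s n = insert s (Finset.Icc (s + 1) n) := by
    ext x
    simp only [Finset.mem_Icc, Finset.mem_insert]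
    omega
  rw [hsplit, Finset.sum_insert (by rw [Finset.mem_Icc]; omega)]

lemma pathLdes_le_top {m : ℕ} (p : DyckPath m) : pathLdes p ≤ m - 1 := by
  rw [pathLdes_def]
  apply Finset.sup_le
  intro t ht
  rw [mem_peakSet] at ht
  exact ht.1.2

lemma main_all : ∀ (n : ℕ) (f : ℕ → ℤ),
    ((∑ π ∈ Tset n, f (ldes π)) = (∑ p : DyckPath n, f (pathLdes p))) ∧
      ((∑ π ∈ Tset n, f (ldes π)) = (∑ p : DyckPath n, f (pathLind p - 1))) := by
  intro n
  induction n with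
  | zero =>
    intro f
    have hperm : ∀ π : Equiv.Perm (Fin 0), π = 1 := fun π => Equiv.ext (fun i => i.elim0)
    have hT0 : Tset 0 = {1} := by
      apply Finset.eq_singleton_iff_unique_mem.2
      constructor
      · rw [mem_Tset]
        rintro ⟨i, -⟩
        exact i.elim0
      · intro π _
        exact hperm π
    have hldes0 : ldes (1 : Equiv.Perm (Fin 0)) = 0 := by
      rw [ldes_def]
      rw [show desSet (1 : Equiv.Perm (Fin 0)) = ∅ from ?_]
      · rfl
      · apply Finset.eq_empty_of_forall_notMem
        intro t ht
        rw [mem_desSet] at ht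
        omega
    have hpL : ∀ p : DyckPath 0, pathLdes p = 0 := by
      intro p
      rw [pathLdes_def]
      rw [show peakSet p (0 - 1) = ∅ from ?_]
      · rfl
      · apply Finset.eq_empty_of_forall_notMem
        intro t ht
        rw [mem_peakSet] at ht
        omega
    have hpI : ∀ p : DyckPath 0, pathLind p = 0 := by
      intro p
      rw [pathLind_def]
      rw [show peakSet p 0 = ∅ from ?_]
      · rfl
      · apply Finset.eq_empty_of_forall_notMem
        intro t ht
        rw [mem_peakSet] at ht
        omega
    have hD0 : IsDyckPred 0 (fun i : Fin (2 * 0) => false) := by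
      constructor
      · rw [show (Finset.univ.filter (fun i : Fin (2 * 0) => false = true)) = ∅ from ?_]
        · rfl
        · apply Finset.eq_empty_of_forall_notMem
          intro i _
          exact absurd i.isLt (by omega)
      · intro k hk
        omega
    haveI : Unique (DyckPath 0) :=
      { default := ⟨fun _ => false, hD0⟩
        uniq := fun p => Subtype.ext (funext (fun i => absurd i.isLt (by omega))) }
    have hsum : ∀ g : DyckPath 0 → ℤ, (∑ p : DyckPath 0, g p) = g default := by
      intro g
      exact Fintype.sum_unique g
    rw [hT0, Finset.sum_singleton, hldes0, hsum, hsum, hpL, hpI]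
    exact ⟨rfl, rfl⟩
  | succ n ih =>
    intro f
    set F : ℕ → ℤ := fun s => f s + ∑ j ∈ Finset.Icc (s + 1) n, f j with hF
    -- permutation side
    have hP : (∑ π ∈ Tset (n + 1), f (ldes π)) = ∑ π' ∈ Tset n, F (ldes π') := by
      rw [perm_sum_step n f]
      apply Finset.sum_congr rfl
      intro π' _
      have hb : ldes π' ≤ n := le_trans (ldes_le π') (by omega)
      exact inner_sum_eq n f hb
    -- path side, ldes statistic
    have hQ : (∑ p : DyckPath (n + 1), f (pathLdes p)) = ∑ p' : DyckPath n, F (pathLdes p') := by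
      rw [path_sum_step (g := fun p => f (pathLdes p))
        (G := fun s j => f (if j = n + 1 then s else j))
        (fun p' j hj1 hj2 => by rw [pathLdes_insD p' hj1 hj2])]
      apply Finset.sum_congr rfl
      intro p' _
      have hb : pathLdes p' ≤ n := le_trans (pathLdes_le_top p') (by omega)
      exact inner_sum_eq n f hb
    -- path side, lind statistic
    have hR : (∑ p : DyckPath (n + 1), f (pathLind p - 1)) = ∑ p' : DyckPath n, F (pathLdes p') := by
      rw [path_sum_step (g := fun p => f (pathLind p - 1))
        (G := fun s j => f (j - 1))
        (fun p' j hj1 hj2 => by rw [pathLind_insD p' hj1 hj2])]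
      apply Finset.sum_congr rfl
      intro p' _
      have hb : pathLdes p' ≤ n := le_trans (pathLdes_le_top p') (by omega)
      exact inner_sum_eq' n f hb
    have hIH := (ih F).1
    constructor
    · rw [hP, hQ, hIH]
    · rw [hP, hR, hIH]

end MainAssembly

theorem ldes_perm_path_equidistribution (n : ℕ) (q : ℤ) :
    (∑ π ∈ Tset n, q ^ ldes π) = (∑ p : DyckPath n, q ^ pathLdes p) ∧
      (∑ π ∈ Tset n, q ^ ldes π) = ∑ p : DyckPath n, q ^ (pathLind p - 1) := by
  exact main_all n (fun s => q ^ s)
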